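/- The real matrix group generated by (1/√2)·[[1,1],[1,−1]] and diag(1, −1) is finite of order 16 (the dihedral group of order 16), and its ring of polynomial invariants is generated by x² + y² and x²y²(x² − y²)². -/

import Mathlib

open MvPolynomial

noncomputable section
abbrev P2 := MvPolynomial (Fin 2) ℝ

lemma aeval_aeval (f g : Fin 2 → P2) (p : P2) :
    aeval f (aeval g p) = aeval (fun i => aeval f (g i)) p :=
  DFunLike.congr_fun (comp_aeval g (aeval f)) p

lemma eval_aeval (v : Fin 2 → ℝ) (f : Fin 2 → P2) (p : P2) :
    eval v (aeval f p) = eval (fun i => eval v (f i)) p := by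
  have h := DFunLike.congr_fun (comp_aeval f (aeval (R := ℝ) v)) p
  simpa [coe_aeval_eq_eval] using h

lemma aeval_X_self (p : P2) : aeval (fun i => (X i : P2)) p = p := by
  simpa using aeval_X_left_apply p

-- scaling coefficients
lemma aeval_scale_monomial (d : Fin 2 → ℝ) (n : Fin 2 →₀ ℕ) (c : ℝ) :
    aeval (fun i => C (d i) * X i) (monomial n c) =
      monomial n (d 0 ^ n 0 * d 1 ^ n 1 * c) := by
  rw [aeval_monomial, Finsupp.prod_fintype _ _ (fun i => by simp)]
  rw [monomial_eq, Finsupp.prod_fintype _ _ (fun i => by simp)]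
  simp only [Fin.prod_univ_two, mul_pow, ← C_pow, algebraMap_eq]
  rw [C_mul, C_mul]
  ring

lemma coeff_aeval_scale (d : Fin 2 → ℝ) (p : P2) (m : Fin 2 →₀ ℕ) :
    coeff m (aeval (fun i => C (d i) * X i) p) = d 0 ^ m 0 * d 1 ^ m 1 * coeff m p := by
  conv_lhs => rw [← support_sum_monomial_coeff p]
  rw [map_sum]
  rw [coeff_sum]
  simp_rw [aeval_scale_monomial, coeff_monomial]
  rw [Finset.sum_ite_eq' p.support m (fun m' => d 0 ^ m' 0 * d 1 ^ m' 1 * coeff m' p)]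
  by_cases h : m ∈ p.support
  · simp [h]
  · simp [h, notMem_support_iff.mp h]


lemma aeval_sq_monomial (b : Fin 2 → Bool) (n : Fin 2 →₀ ℕ) (c : ℝ) :
    aeval (fun i => if b i then (X i : P2) ^ 2 else X i) (monomial n c) =
      monomial (Finsupp.equivFunOnFinite.symm (fun i => if b i then 2 * n i else n i)) c := by
  rw [aeval_monomial, Finsupp.prod_fintype _ _ (fun i => by simp)]
  rw [monomial_eq, Finsupp.prod_fintype _ _ (fun i => by simp)]
  simp only [algebraMap_eq, Finsupp.coe_equivFunOnFinite_symm]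
  congr 1
  apply Finset.prod_congr rfl
  intro i _
  by_cases h : b i <;> simp [h, pow_mul]

lemma exists_half (b : Fin 2 → Bool) (p : P2)
    (h : ∀ m ∈ p.support, ∀ i, b i → Even (m i)) :
    ∃ q : P2, aeval (fun i => if b i then (X i : P2) ^ 2 else X i) q = p := by
  refine ⟨∑ m ∈ p.support, monomial
      (Finsupp.equivFunOnFinite.symm (fun i => if b i then m i / 2 else m i)) (coeff m p), ?_⟩
  rw [map_sum]
  conv_rhs => rw [← support_sum_monomial_coeff p]
  apply Finset.sum_congr rfl
  intro m hm
  rw [aeval_sq_monomial]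
  have he : (Finsupp.equivFunOnFinite.symm (fun i => if b i then
      2 * ((Finsupp.equivFunOnFinite.symm (fun j => if b j then m j / 2 else m j)) i)
      else (Finsupp.equivFunOnFinite.symm (fun j => if b j then m j / 2 else m j)) i)) = m := by
    ext i
    simp only [Finsupp.coe_equivFunOnFinite_symm]
    by_cases hb : b i
    · simp only [hb, if_true]
      exact Nat.two_mul_div_two_of_even (h m hm i hb)
    · simp [hb]
  rw [he]


lemma perm_fin2 : ∀ e : Equiv.Perm (Fin 2), e = 1 ∨ e = Equiv.swap 0 1 := by decide

lemma aeval_fun_congr {F G : Fin 2 → P2} (h : ∀ i, F i = G i) (p : P2) :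
    aeval (R := ℝ) F p = aeval (R := ℝ) G p := by rw [show F = G from funext h]

lemma rename_swap (q : P2) : rename (Equiv.swap (0:Fin 2) 1) q = aeval ![X 1, X 0] q := by
  rw [rename_eq_aeval]
  apply aeval_fun_congr
  intro i
  fin_cases i <;> simp [Equiv.swap_apply_def] <;> rfl

lemma aeval_mem (F : Fin 2 → P2) (T : Subalgebra ℝ P2) (hF : ∀ i, F i ∈ T) (w : P2) :
    aeval F w ∈ T := by
  induction w using MvPolynomial.induction_on with
  | C a => simpa using T.algebraMap_mem a
  | add p q hp hq => rw [map_add]; exact T.add_mem hp hq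
  | mul_X p i hp => rw [map_mul, aeval_X]; exact T.mul_mem hp (hF i)

lemma symm_rep (q : P2) (hq : aeval ![X 1, X 0] q = q) :
    ∃ r : P2, aeval ![X 0 + X 1, X 0 * X 1] r = q := by
  have hsym : q.IsSymmetric := by
    intro e
    rcases perm_fin2 e with h | h
    · simp [h]
    · rw [h, rename_swap, hq]
  obtain ⟨r, hr⟩ := esymmAlgHom_surjective (n := 2) ℝ (by simp) ⟨q, (mem_symmetricSubalgebra q).2 hsym⟩
  refine ⟨r, ?_⟩
  have h0 := congrArg Subtype.val hr
  rw [esymmAlgHom_apply] at h0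
  have h2 : (aeval fun i : Fin 2 => esymm (Fin 2) ℝ (↑i + 1)) r = q := h0
  rw [← h2]
  apply aeval_fun_congr
  intro i
  fin_cases i
  · simp [esymm_one, Fin.sum_univ_two]
  · show _ = esymm (Fin 2) ℝ 2
    rw [esymm]
    rw [show Finset.powersetCard 2 (Finset.univ : Finset (Fin 2)) = {Finset.univ} by decide]
    simp [Fin.prod_univ_two]

lemma pfunext {p q : P2} (h : ∀ v : Fin 2 → ℝ, eval v p = eval v q) : p = q :=
  MvPolynomial.funext h

set_option maxHeartbeats 1000000 in
theorem invariant_mem (c : ℝ) (hc : c ^ 2 = 1 / 2) (p : P2)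
    (hB : aeval (R := ℝ) ![X 0, -X 1] p = p)
    (hD : aeval (R := ℝ) ![-X 0, X 1] p = p)
    (hT : aeval (R := ℝ) ![X 1, X 0] p = p)
    (hAi : aeval (R := ℝ) ![C c * (X 0 + X 1), C c * (X 0 - X 1)] p = p) :
    p ∈ Algebra.adjoin ℝ
      ({X 0 ^ 2 + X 1 ^ 2, X 0 ^ 2 * X 1 ^ 2 * (X 0 ^ 2 - X 1 ^ 2) ^ 2} :
        Set P2) := by
  -- notation
  set T := Algebra.adjoin ℝ
      ({X 0 ^ 2 + X 1 ^ 2, X 0 ^ 2 * X 1 ^ 2 * (X 0 ^ 2 - X 1 ^ 2) ^ 2} : Set P2) with hT_def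
  -- Step 1: evenness of exponents
  have hev0 : ∀ m ∈ p.support, Even (m 0) := by
    intro m hm
    have h1 : aeval (fun i => C ((![(-1:ℝ), 1]) i) * X i) p = p := by
      rw [aeval_fun_congr (G := ![-X 0, X 1]) (fun i => by fin_cases i <;> simp)]
      exact hD
    have h2 := coeff_aeval_scale ![(-1:ℝ), 1] p m
    rw [h1] at h2
    simp only [Matrix.cons_val_zero, Matrix.cons_val_one, Matrix.head_cons, Fin.mk_zero, Fin.mk_one, one_pow, mul_one] at h2
    rcases Nat.even_or_odd (m 0) with he | ho
    · exact he
    · exfalso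
      rw [ho.neg_one_pow] at h2
      have : coeff m p = 0 := by linarith [h2]
      exact (mem_support_iff.mp hm) this
  have hev1 : ∀ m ∈ p.support, Even (m 1) := by
    intro m hm
    have h1 : aeval (fun i => C ((![(1:ℝ), -1]) i) * X i) p = p := by
      rw [aeval_fun_congr (G := ![X 0, -X 1]) (fun i => by fin_cases i <;> simp)]
      exact hB
    have h2 := coeff_aeval_scale ![(1:ℝ), -1] p m
    rw [h1] at h2
    simp only [Matrix.cons_val_zero, Matrix.cons_val_one, Matrix.head_cons, Fin.mk_zero, Fin.mk_one, one_pow, one_mul] at h2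
    rcases Nat.even_or_odd (m 1) with he | ho
    · exact he
    · exfalso
      rw [ho.neg_one_pow] at h2
      have : coeff m p = 0 := by linarith [h2]
      exact (mem_support_iff.mp hm) this
  -- Step 2: p = q'(x², y²)
  obtain ⟨q', hq'⟩ := exists_half (fun _ => true) p
    (fun m hm i _ => by fin_cases i; exacts [hev0 m hm, hev1 m hm])
  rw [aeval_fun_congr (G := fun i => (X i : P2) ^ 2) (fun i => by simp)] at hq'
  -- Step 3: symmetrize
  set q : P2 := (1/2 : ℝ) • (q' + aeval (R := ℝ) ![X 1, X 0] q') with hq_def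
  have hcomm : aeval (R := ℝ) (fun i => (X i : P2) ^ 2) (aeval (R := ℝ) ![X 1, X 0] q')
      = aeval (R := ℝ) ![X 1, X 0] (aeval (R := ℝ) (fun i => (X i : P2) ^ 2) q') := by
    rw [aeval_aeval, aeval_aeval]
    exact aeval_fun_congr (fun i => by fin_cases i <;> simp) q'
  have hΦq : aeval (R := ℝ) (fun i => (X i : P2) ^ 2) q = p := by
    rw [hq_def, map_smul, map_add, hcomm, hq', hT, ← two_smul ℝ p, smul_smul]
    norm_num
  have hswq : aeval (R := ℝ) ![X 1, X 0] q = q := by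
    rw [hq_def, map_smul, map_add]
    have : aeval (R := ℝ) ![X 1, X 0] (aeval (R := ℝ) ![X 1, X 0] q') = q' := by
      rw [aeval_aeval]
      have hfun2 : ∀ i : Fin 2, aeval (R := ℝ) ![X 1, X 0] (![X 1, X 0] i) = (X i : P2) := by
        intro i; fin_cases i <;> simp
      rw [aeval_fun_congr hfun2]
      exact aeval_X_self q'
    rw [this, add_comm]
  obtain ⟨r, hr⟩ := symm_rep q hswq
  have hp : aeval (R := ℝ) ![X 0 ^ 2 + X 1 ^ 2, X 0 ^ 2 * X 1 ^ 2] r = p := by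
    rw [← hΦq, ← hr, aeval_aeval]
    exact aeval_fun_congr (fun i => by fin_cases i <;> simp) r
  -- Step 4: use A-invariance
  set θg : Fin 2 → P2 := ![X 0 ^ 2 + X 1 ^ 2, X 0 ^ 2 * X 1 ^ 2] with hθg
  set σg : Fin 2 → P2 := ![X 0, C (1/4) * X 0 ^ 2 - X 1] with hσg
  set mg : Fin 2 → P2 := ![C c * (X 0 + X 1), C c * (X 0 - X 1)] with hmg
  have hθσ : ∀ w : P2, aeval θg (aeval σg w) = aeval mg (aeval θg w) := by
    intro w
    rw [aeval_aeval, aeval_aeval]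
    refine aeval_fun_congr (fun i => ?_) w
    fin_cases i
    · apply pfunext; intro v
      simp only [hθg, hσg, hmg, eval_aeval, Matrix.cons_val_zero, Matrix.cons_val_one,
        Matrix.head_cons, Fin.mk_zero, Fin.mk_one, map_add, map_sub, map_mul, map_pow, eval_X, eval_C, map_one]
      linear_combination (-2 * (v 0)^2 - 2 * (v 1)^2) * hc
    · apply pfunext; intro v
      simp only [hθg, hσg, hmg, eval_aeval, Matrix.cons_val_zero, Matrix.cons_val_one,
        Matrix.head_cons, Fin.mk_zero, Fin.mk_one, map_add, map_sub, map_mul, map_pow, eval_X, eval_C, map_one]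
      linear_combination (-((v 0)^2 - (v 1)^2)^2 * (c^2 + 1/2)) * hc
  have hσθr : aeval θg (aeval σg r) = p := by rw [hθσ, hp, hAi]
  set r₂ : P2 := (1/2 : ℝ) • (r + aeval σg r) with hr₂_def
  have hθr₂ : aeval θg r₂ = p := by
    rw [hr₂_def, map_smul, map_add, hp, hσθr, ← two_smul ℝ p, smul_smul]
    norm_num
  have hσσ : ∀ w : P2, aeval σg (aeval σg w) = w := by
    intro w
    rw [aeval_aeval]
    have hfun : ∀ i, aeval σg (σg i) = (X i : P2) := by
      intro i
      fin_cases i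
      · simp [hσg]
      · apply pfunext; intro v
        simp only [hσg, eval_aeval, Matrix.cons_val_zero, Matrix.cons_val_one,
          Matrix.head_cons, Fin.mk_zero, Fin.mk_one, map_add, map_sub, map_mul, map_pow, eval_X, eval_C]
        ring
    rw [aeval_fun_congr hfun]
    exact aeval_X_self w
  have hσr₂ : aeval σg r₂ = r₂ := by
    rw [hr₂_def, map_smul, map_add, hσσ, add_comm]
  -- Step 5: change of variables τ
  set τp : Fin 2 → P2 := ![X 0, X 1 + C (1/8) * X 0 ^ 2] with hτp
  set τm : Fin 2 → P2 := ![X 0, X 1 - C (1/8) * X 0 ^ 2] with hτm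
  set u : P2 := aeval τp r₂ with hu_def
  have hν : aeval (R := ℝ) ![X 0, -X 1] u = u := by
    rw [hu_def, aeval_aeval]
    have : aeval (fun i => aeval (R := ℝ) ![X 0, -X 1] (τp i)) r₂ = aeval (fun i => aeval τp (σg i)) r₂ := by
      refine aeval_fun_congr (fun i => ?_) r₂
      fin_cases i
      · simp [hτp, hσg]
      · apply pfunext; intro v
        simp only [hτp, hσg, eval_aeval, Matrix.cons_val_zero, Matrix.cons_val_one,
          Matrix.head_cons, Fin.mk_zero, Fin.mk_one, map_add, map_sub, map_mul, map_pow, map_neg, eval_X, eval_C]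
        ring
    rw [this, ← aeval_aeval, hσr₂]
  -- Step 6: u is even in X 1
  have hevu : ∀ m ∈ u.support, Even (m 1) := by
    intro m hm
    have h1 : aeval (fun i => C ((![(1:ℝ), -1]) i) * X i) u = u := by
      rw [aeval_fun_congr (G := ![X 0, -X 1]) (fun i => by fin_cases i <;> simp)]
      exact hν
    have h2 := coeff_aeval_scale ![(1:ℝ), -1] u m
    rw [h1] at h2
    simp only [Matrix.cons_val_zero, Matrix.cons_val_one, Matrix.head_cons, Fin.mk_zero, Fin.mk_one, one_pow, one_mul] at h2
    rcases Nat.even_or_odd (m 1) with he | ho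
    · exact he
    · exfalso
      rw [ho.neg_one_pow] at h2
      have : coeff m u = 0 := by linarith [h2]
      exact (mem_support_iff.mp hm) this
  have hbev : ∀ m ∈ u.support, ∀ i : Fin 2, ![false, true] i = true → Even (m i) := by
    intro m hm i hi
    fin_cases i
    · simp at hi
    · exact hevu m hm
  obtain ⟨w, hw⟩ := exists_half ![false, true] u hbev
  rw [aeval_fun_congr (G := ![X 0, X 1 ^ 2]) (fun i => by fin_cases i <;> simp)] at hw
  -- Step 7: reconstruct r₂ and p
  have hτmτp : aeval τm u = r₂ := by
    rw [hu_def, aeval_aeval]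
    have hfun : ∀ i, aeval τm (τp i) = (X i : P2) := by
      intro i
      fin_cases i
      · simp [hτp, hτm]
      · apply pfunext; intro v
        simp only [hτp, hτm, eval_aeval, Matrix.cons_val_zero, Matrix.cons_val_one,
          Matrix.head_cons, Fin.mk_zero, Fin.mk_one, map_add, map_sub, map_mul, map_pow, eval_X, eval_C]
        ring
    rw [aeval_fun_congr hfun]
    exact aeval_X_self r₂
  have hr₂w : aeval (R := ℝ) ![X 0, (X 1 - C (1/8) * X 0 ^ 2) ^ 2] w = r₂ := by
    rw [← hτmτp, ← hw, aeval_aeval]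
    refine aeval_fun_congr (fun i => ?_) w
    · fin_cases i
      · simp [hτm]
      · simp [hτm]
  have hpw : aeval (R := ℝ) ![X 0 ^ 2 + X 1 ^ 2,
      (X 0 ^ 2 * X 1 ^ 2 - C (1/8) * (X 0 ^ 2 + X 1 ^ 2) ^ 2) ^ 2] w = p := by
    rw [← hθr₂, ← hr₂w, aeval_aeval]
    refine aeval_fun_congr (fun i => ?_) w
    fin_cases i
    · simp [hθg]
    · apply pfunext; intro v
      simp only [hθg, eval_aeval, Matrix.cons_val_zero, Matrix.cons_val_one,
        Matrix.head_cons, Fin.mk_zero, Fin.mk_one, map_add, map_sub, map_mul, map_pow, eval_X, eval_C]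
      try ring
  -- Step 8: membership
  rw [← hpw]
  apply aeval_mem
  intro i
  fin_cases i
  · exact Algebra.subset_adjoin (Set.mem_insert _ _)
  · have hkey : ((X 0 ^ 2 * X 1 ^ 2 - C (1/8) * (X 0 ^ 2 + X 1 ^ 2) ^ 2) ^ 2 : P2)
        = C (1/64) * (X 0 ^ 2 + X 1 ^ 2) ^ 4
          - C (1/4) * (X 0 ^ 2 * X 1 ^ 2 * (X 0 ^ 2 - X 1 ^ 2) ^ 2) := by
      apply pfunext; intro v
      simp only [map_add, map_sub, map_mul, map_pow, eval_X, eval_C]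
      ring
    rw [hkey]
    refine T.sub_mem (T.mul_mem ?_ (T.pow_mem (Algebra.subset_adjoin (Set.mem_insert _ _)) 4))
      (T.mul_mem ?_ (Algebra.subset_adjoin (Set.mem_insert_of_mem _ rfl)))
    · rw [← algebraMap_eq]; exact T.algebraMap_mem _
    · rw [← algebraMap_eq]; exact T.algebraMap_mem _

abbrev GM := (Matrix (Fin 2) (Fin 2) ℝ)ˣ

theorem card_closure_16 (A B : GM)
    (hA : (A : Matrix (Fin 2) (Fin 2) ℝ) = (Real.sqrt 2)⁻¹ • !![1, 1; 1, -1])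
    (hB : (B : Matrix (Fin 2) (Fin 2) ℝ) = !![1, 0; 0, -1]) :
    Nat.card (Subgroup.closure {A, B} : Subgroup GM) = 16 := by
  have hc : (Real.sqrt 2)⁻¹ * (Real.sqrt 2)⁻¹ = 1 / 2 := by
    rw [← mul_inv, Real.mul_self_sqrt (by norm_num)]
    norm_num
  have hAA : A * A = 1 := by
    ext : 1
    rw [Units.val_mul, hA, Units.val_one, Matrix.smul_mul, Matrix.mul_smul, smul_smul, hc]
    ext i j
    fin_cases i <;> fin_cases j <;>
      simp [Matrix.mul_apply, Fin.sum_univ_two, Matrix.one_apply] <;> norm_num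
  have hBB : B * B = 1 := by
    ext : 1
    rw [Units.val_mul, hB, Units.val_one]
    ext i j
    fin_cases i <;> fin_cases j <;>
      simp [Matrix.mul_apply, Fin.sum_univ_two, Matrix.one_apply]
  set R : GM := A * B with hR_def
  have hRval : (R : Matrix (Fin 2) (Fin 2) ℝ) = (Real.sqrt 2)⁻¹ • !![1, -1; 1, 1] := by
    rw [hR_def, Units.val_mul, hA, hB, Matrix.smul_mul]
    congr 1
    ext i j
    fin_cases i <;> fin_cases j <;> simp [Matrix.mul_apply, Fin.sum_univ_two]
  have hR2 : ((R * R : GM) : Matrix (Fin 2) (Fin 2) ℝ) = !![0, -1; 1, 0] := by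
    rw [Units.val_mul, hRval, Matrix.smul_mul, Matrix.mul_smul, smul_smul, hc]
    ext i j
    fin_cases i <;> fin_cases j <;>
      simp [Matrix.mul_apply, Fin.sum_univ_two] <;> norm_num
  have hR4 : ((R ^ 4 : GM) : Matrix (Fin 2) (Fin 2) ℝ) = !![-1, 0; 0, -1] := by
    have : (R ^ 4 : GM) = (R * R) * (R * R) := by
      rw [show (4:ℕ) = 2 * 2 from rfl, pow_mul, pow_two, pow_two]
    rw [this, Units.val_mul, hR2]
    ext i j
    fin_cases i <;> fin_cases j <;> simp [Matrix.mul_apply, Fin.sum_univ_two]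
  have hR8 : R ^ 8 = 1 := by
    have h84 : (R ^ 8 : GM) = (R ^ 4) * (R ^ 4) := by
      rw [show (8:ℕ) = 4 * 2 from rfl, pow_mul, pow_two]
    ext : 1
    rw [h84, Units.val_mul, hR4, Units.val_one]
    ext i j
    fin_cases i <;> fin_cases j <;> simp [Matrix.mul_apply, Fin.sum_univ_two, Matrix.one_apply]
  have hR4ne : R ^ 4 ≠ 1 := by
    intro h
    have h00 : ((R ^ 4 : GM) : Matrix (Fin 2) (Fin 2) ℝ) 0 0
        = ((1 : GM) : Matrix (Fin 2) (Fin 2) ℝ) 0 0 := by rw [h]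
    rw [hR4, Units.val_one] at h00
    simp [Matrix.one_apply] at h00
    norm_num at h00
  have hord : orderOf R = 8 := by
    have := orderOf_eq_prime_pow (x := R) (p := 2) (n := 2)
      (by simpa using hR4ne) (by simpa using hR8)
    simpa using this
  -- conjugation
  have hAinv : A⁻¹ = A := by
    rw [← mul_one A⁻¹, ← hAA, ← mul_assoc, inv_mul_cancel, one_mul]
  have hBinv : B⁻¹ = B := by
    rw [← mul_one B⁻¹, ← hBB, ← mul_assoc, inv_mul_cancel, one_mul]
  have hconj1 : A * R * A⁻¹ = R⁻¹ := by
    rw [hAinv, hR_def, mul_inv_rev, hAinv, hBinv]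
    calc A * (A * B) * A = (A * A) * (B * A) := by group
    _ = B * A := by rw [hAA, one_mul]
  have hconj : ∀ m : ℤ, A * R ^ m * A⁻¹ = R ^ (-m) := by
    intro m
    have h := map_zpow (MulAut.conj A) R m
    simp only [MulAut.conj_apply, hconj1] at h
    rw [h, inv_zpow, zpow_neg]
  have hRA : ∀ m : ℤ, R ^ m * A = A * R ^ (-m) := by
    intro m
    have := hconj m
    rw [hAinv] at this
    calc R ^ m * A = A * (A * R ^ m * A) := by
          rw [← mul_assoc, ← mul_assoc, hAA, one_mul]
    _ = A * R ^ (-m) := by rw [this]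
  set K : Subgroup GM := Subgroup.zpowers R with hK_def
  set img : Set GM := (fun x => A * x) '' (K : Set GM) with himg_def
  have hmemK : ∀ x : GM, x ∈ K ↔ ∃ m : ℤ, R ^ m = x := fun x => Subgroup.mem_zpowers_iff
  set H : Subgroup GM :=
    { carrier := (K : Set GM) ∪ img
      one_mem' := Or.inl K.one_mem
      mul_mem' := by
        rintro x y (hx | ⟨kx, hkx, rfl⟩) (hy | ⟨ky, hky, rfl⟩)
        · exact Or.inl (K.mul_mem hx hy)
        · obtain ⟨m, rfl⟩ := (hmemK _).mp hx
          obtain ⟨n, rfl⟩ := (hmemK _).mp hky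
          refine Or.inr ⟨R ^ (n - m), (hmemK _).mpr ⟨n - m, rfl⟩, ?_⟩
          rw [← mul_assoc, hRA m]
          group
        · obtain ⟨m, rfl⟩ := (hmemK _).mp hkx
          obtain ⟨n, rfl⟩ := (hmemK _).mp hy
          exact Or.inr ⟨R ^ (m + n), (hmemK _).mpr ⟨m + n, rfl⟩, by group⟩
        · obtain ⟨m, rfl⟩ := (hmemK _).mp hkx
          obtain ⟨n, rfl⟩ := (hmemK _).mp hky
          refine Or.inl ((hmemK _).mpr ⟨n - m, ?_⟩)
          calc R ^ (n - m) = R ^ (-m) * R ^ n := by group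
          _ = (A * A) * R ^ (-m) * R ^ n := by rw [hAA, one_mul]
          _ = A * (R ^ m * A) * R ^ n := by rw [hRA m]; group
          _ = A * R ^ m * (A * R ^ n) := by group
      inv_mem' := by
        rintro x (hx | ⟨k, hk, rfl⟩)
        · exact Or.inl (K.inv_mem hx)
        · obtain ⟨m, rfl⟩ := (hmemK _).mp hk
          refine Or.inr ⟨R ^ m, (hmemK _).mpr ⟨m, rfl⟩, ?_⟩
          rw [mul_inv_rev, ← zpow_neg, hAinv, hRA (-m)]
          group } with hH_def
  have hcl : Subgroup.closure {A, B} = H := by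
    apply le_antisymm
    · rw [Subgroup.closure_le]
      rintro x (rfl | rfl)
      · exact Or.inr ⟨1, K.one_mem, by simp⟩
      · refine Or.inr ⟨R, (hmemK _).mpr ⟨1, by group⟩, ?_⟩
        show A * R = x
        rw [hR_def, ← mul_assoc, hAA, one_mul]
    · intro x hx
      have hAcl : A ∈ Subgroup.closure ({A, B} : Set GM) :=
        Subgroup.subset_closure (Set.mem_insert _ _)
      have hBcl : B ∈ Subgroup.closure ({A, B} : Set GM) :=
        Subgroup.subset_closure (Set.mem_insert_of_mem _ rfl)
      have hRcl : R ∈ Subgroup.closure ({A, B} : Set GM) :=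
        Subgroup.mul_mem _ hAcl hBcl
      rcases hx with hx | ⟨k, hk, rfl⟩
      · obtain ⟨m, rfl⟩ := (hmemK _).mp hx
        exact Subgroup.zpow_mem _ hRcl m
      · obtain ⟨m, rfl⟩ := (hmemK _).mp hk
        exact Subgroup.mul_mem _ hAcl (Subgroup.zpow_mem _ hRcl m)
  -- determinant argument
  have hAnotK : A ∉ K := by
    intro hAK
    obtain ⟨m, hm⟩ := (hmemK _).mp hAK
    set φ : GM →* ℝˣ := Units.map (Matrix.detMonoidHom) with hφ
    have hdetA : (↑(φ A) : ℝ) = -1 := by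
      show Matrix.detMonoidHom (A : Matrix (Fin 2) (Fin 2) ℝ) = -1
      rw [Matrix.coe_detMonoidHom, hA, Matrix.det_smul, Matrix.det_fin_two_of]
      simp only [Fintype.card_fin]
      rw [show ((Real.sqrt 2)⁻¹) ^ 2 = (Real.sqrt 2)⁻¹ * (Real.sqrt 2)⁻¹ by ring, hc]
      norm_num
    have hdetB : (↑(φ B) : ℝ) = -1 := by
      show Matrix.detMonoidHom (B : Matrix (Fin 2) (Fin 2) ℝ) = -1
      rw [Matrix.coe_detMonoidHom, hB, Matrix.det_fin_two_of]
      norm_num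
    have hdetR : φ R = 1 := by
      ext : 1
      rw [hR_def, map_mul, Units.val_mul, hdetA, hdetB]
      norm_num
    have : (↑(φ A) : ℝ) = 1 := by
      rw [← hm, map_zpow, hdetR, one_zpow, Units.val_one]
    rw [hdetA] at this
    norm_num at this
  have hdisj : Disjoint (K : Set GM) img := by
    rw [Set.disjoint_left]
    rintro x hxK ⟨k, hk, hkx⟩
    have hAeq : A = x * k⁻¹ := by rw [← hkx]; group
    exact hAnotK (hAeq ▸ K.mul_mem hxK (K.inv_mem hk))
  have hfinK : (K : Set GM).Finite := by
    have hpos : 0 < Nat.card K := by rw [Nat.card_zpowers, hord]; norm_num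
    have hfin : Finite ↥K := (Nat.card_pos_iff.mp hpos).2
    exact Set.finite_coe_iff.mp hfin
  have hncardK : (K : Set GM).ncard = 8 := by
    rw [← Nat.card_coe_set_eq, SetLike.coe_sort_coe, Nat.card_zpowers, hord]
  have hncardimg : img.ncard = 8 := by
    rw [himg_def, Set.ncard_image_of_injective _ (mul_right_injective A), hncardK]
  have hunion : ((K : Set GM) ∪ img).ncard = 16 := by
    rw [Set.ncard_union_eq hdisj hfinK (hfinK.image _), hncardK, hncardimg]
  rw [hcl]
  have hfinal : Nat.card ↥H = ((K : Set GM) ∪ img).ncard := by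
    rw [← Nat.card_coe_set_eq]
    rfl
  rw [hfinal, hunion]

end

/-- The action of a 2×2 matrix on polynomials in two variables by linear substitution
of the variables: `(matAct M p)(x) = p(M x)`. -/
noncomputable def matAct (M : Matrix (Fin 2) (Fin 2) ℝ)
    (p : MvPolynomial (Fin 2) ℝ) : MvPolynomial (Fin 2) ℝ :=
  aeval (fun i => ∑ j, C (M i j) * X j) p


lemma matAct_def (M : Matrix (Fin 2) (Fin 2) ℝ) (p : P2) :
    matAct M p = aeval (R := ℝ) (fun i => ∑ j, C (M i j) * X j) p := rfl

lemma matAct_mul (M N : Matrix (Fin 2) (Fin 2) ℝ) (p : P2) :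
    matAct (M * N) p = matAct N (matAct M p) := by
  rw [matAct_def, matAct_def, matAct_def, aeval_aeval]
  refine aeval_fun_congr (fun i => ?_) p
  apply pfunext; intro v
  rw [eval_aeval]
  simp only [Fin.sum_univ_two, map_add, map_mul, eval_C, eval_X, Matrix.mul_apply]
  ring

lemma matAct_one (p : P2) : matAct 1 p = p := by
  rw [matAct_def]
  rw [aeval_fun_congr (F := fun i => ∑ j, C ((1 : Matrix (Fin 2) (Fin 2) ℝ) i j) * X j)
    (G := fun i => (X i : P2)) (fun i => by
      fin_cases i <;> simp [Fin.sum_univ_two, Matrix.one_apply])]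
  exact aeval_X_self p

-- `matAct` is an algebra-hom application, record ring lemmas
lemma matAct_add (M : Matrix (Fin 2) (Fin 2) ℝ) (p q : P2) :
    matAct M (p + q) = matAct M p + matAct M q := map_add _ _ _
lemma matAct_mulp (M : Matrix (Fin 2) (Fin 2) ℝ) (p q : P2) :
    matAct M (p * q) = matAct M p * matAct M q := map_mul _ _ _
lemma matAct_algebraMap (M : Matrix (Fin 2) (Fin 2) ℝ) (r : ℝ) :
    matAct M (algebraMap ℝ P2 r) = algebraMap ℝ P2 r := by
  rw [algebraMap_eq, matAct_def, aeval_C, algebraMap_eq]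


set_option maxHeartbeats 1000000

/-- The real matrix group generated by the MacWilliams matrix `(1/√2)[[1,1],[1,−1]]` and
`diag(1,−1)` has order 16, and its ring of polynomial invariants is generated by
`x² + y²` and `x²y²(x² − y²)²`. -/
theorem gleason_typeI_group_and_invariants
    (A B : (Matrix (Fin 2) (Fin 2) ℝ)ˣ)
    (hA : (A : Matrix (Fin 2) (Fin 2) ℝ) = (Real.sqrt 2)⁻¹ • !![1, 1; 1, -1])
    (hB : (B : Matrix (Fin 2) (Fin 2) ℝ) = !![1, 0; 0, -1]) :
    Nat.card (Subgroup.closure {A, B} : Subgroup (Matrix (Fin 2) (Fin 2) ℝ)ˣ) = 16 ∧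
    {p : MvPolynomial (Fin 2) ℝ |
        ∀ g ∈ Subgroup.closure ({A, B} : Set (Matrix (Fin 2) (Fin 2) ℝ)ˣ),
          matAct (g : (Matrix (Fin 2) (Fin 2) ℝ)ˣ) p = p}
      = (Algebra.adjoin ℝ
          ({X 0 ^ 2 + X 1 ^ 2,
            X 0 ^ 2 * X 1 ^ 2 * (X 0 ^ 2 - X 1 ^ 2) ^ 2} :
            Set (MvPolynomial (Fin 2) ℝ)) : Subalgebra ℝ (MvPolynomial (Fin 2) ℝ)) := by
  have hc2 : ((Real.sqrt 2)⁻¹ : ℝ) ^ 2 = 1 / 2 := by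
    rw [inv_pow, Real.sq_sqrt (by norm_num : (0:ℝ) ≤ 2)]
    norm_num
  refine ⟨card_closure_16 A B hA hB, ?_⟩
  ext p
  simp only [Set.mem_setOf_eq, SetLike.mem_coe]
  constructor
  · -- hard direction
    intro h
    have hAcl : A ∈ Subgroup.closure ({A, B} : Set (Matrix (Fin 2) (Fin 2) ℝ)ˣ) :=
      Subgroup.subset_closure (Set.mem_insert _ _)
    have hBcl : B ∈ Subgroup.closure ({A, B} : Set (Matrix (Fin 2) (Fin 2) ℝ)ˣ) :=
      Subgroup.subset_closure (Set.mem_insert_of_mem _ rfl)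
    have hAp : matAct ((Real.sqrt 2)⁻¹ • !![1, 1; 1, -1]) p = p := by rw [← hA]; exact h A hAcl
    have hBp : matAct !![1, 0; 0, -1] p = p := by rw [← hB]; exact h B hBcl
    set MA : Matrix (Fin 2) (Fin 2) ℝ := (Real.sqrt 2)⁻¹ • !![1, 1; 1, -1] with hMA
    set MB : Matrix (Fin 2) (Fin 2) ℝ := !![1, 0; 0, -1] with hMB
    have hRp : matAct (MA * MB) p = p := by rw [matAct_mul, hAp, hBp]
    have hR2p : matAct ((MA * MB) * (MA * MB)) p = p := by
      rw [matAct_mul (MA * MB) (MA * MB) p, hRp, hRp]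
    have hR2mat : (MA * MB) * (MA * MB) = !![0, -1; 1, 0] := by
      rw [hMA, hMB]
      ext i j
      fin_cases i <;> fin_cases j <;>
        simp [Matrix.mul_apply, Fin.sum_univ_two, Matrix.smul_apply] <;>
        nlinarith [hc2]
    have hR4p : matAct (!![0, -1; 1, 0] * !![0, -1; 1, 0]) p = p := by
      rw [matAct_mul, ← hR2mat, hR2p, hR2p]
    have hR4mat : (!![0, -1; 1, 0] : Matrix (Fin 2) (Fin 2) ℝ) * !![0, -1; 1, 0]
        = !![-1, 0; 0, -1] := by
      ext i j
      fin_cases i <;> fin_cases j <;> simp [Matrix.mul_apply, Fin.sum_univ_two]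
    have hMDp : matAct !![-1, 0; 0, 1] p = p := by
      have : matAct (!![-1, 0; 0, -1] * MB) p = p := by
        rw [matAct_mul, ← hR4mat, hR4p, hBp]
      rw [show (!![-1, 0; 0, -1] : Matrix (Fin 2) (Fin 2) ℝ) * MB = !![-1, 0; 0, 1] by
        rw [hMB]; ext i j; fin_cases i <;> fin_cases j <;>
          simp [Matrix.mul_apply, Fin.sum_univ_two]] at this
      exact this
    have hMTp : matAct !![0, 1; 1, 0] p = p := by
      have : matAct (!![0, -1; 1, 0] * MB) p = p := by
        rw [matAct_mul, ← hR2mat, hR2p, hBp]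
      rw [show (!![0, -1; 1, 0] : Matrix (Fin 2) (Fin 2) ℝ) * MB = !![0, 1; 1, 0] by
        rw [hMB]; ext i j; fin_cases i <;> fin_cases j <;>
          simp [Matrix.mul_apply, Fin.sum_univ_two]] at this
      exact this
    -- convert to aeval form
    have e1 : aeval (R := ℝ) ![X 0, -X 1] p = p := by
      conv_rhs => rw [← hBp, matAct_def]
      refine aeval_fun_congr (fun i => ?_) p
      fin_cases i <;> simp [hMB, Fin.sum_univ_two]
    have e2 : aeval (R := ℝ) ![-X 0, X 1] p = p := by
      conv_rhs => rw [← hMDp, matAct_def]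
      refine aeval_fun_congr (fun i => ?_) p
      fin_cases i <;> simp [Fin.sum_univ_two]
    have e3 : aeval (R := ℝ) ![X 1, X 0] p = p := by
      conv_rhs => rw [← hMTp, matAct_def]
      refine aeval_fun_congr (fun i => ?_) p
      fin_cases i <;> simp [Fin.sum_univ_two]
    have e4 : aeval (R := ℝ)
        ![C ((Real.sqrt 2)⁻¹) * (X 0 + X 1), C ((Real.sqrt 2)⁻¹) * (X 0 - X 1)] p = p := by
      conv_rhs => rw [← hAp, matAct_def]
      refine aeval_fun_congr (fun i => ?_) p
      fin_cases i <;>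
        · apply pfunext; intro v
          simp [hMA, Fin.sum_univ_two, Matrix.smul_apply]
          ring
    exact invariant_mem _ hc2 p e1 e2 e3 e4
  · -- easy direction
    intro hp g hg
    set f0 : P2 := X 0 ^ 2 + X 1 ^ 2 with hf0
    set g0 : P2 := X 0 ^ 2 * X 1 ^ 2 * (X 0 ^ 2 - X 1 ^ 2) ^ 2 with hg0
    set S : Subgroup (Matrix (Fin 2) (Fin 2) ℝ)ˣ :=
      { carrier := {u | matAct (↑u) f0 = f0 ∧ matAct (↑u) g0 = g0}
        one_mem' := ⟨by rw [Units.val_one, matAct_one], by rw [Units.val_one, matAct_one]⟩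
        mul_mem' := by
          rintro u v ⟨hu1, hu2⟩ ⟨hv1, hv2⟩
          exact ⟨by rw [Units.val_mul, matAct_mul, hu1, hv1],
                 by rw [Units.val_mul, matAct_mul, hu2, hv2]⟩
        inv_mem' := by
          rintro u ⟨hu1, hu2⟩
          constructor
          · conv_lhs => rw [← hu1]
            rw [← matAct_mul, Units.mul_inv, matAct_one]
          · conv_lhs => rw [← hu2]
            rw [← matAct_mul, Units.mul_inv, matAct_one] } with hS
    have hAS : A ∈ S := by
      constructor
      · show matAct (↑A) f0 = f0
        rw [hA, hf0, matAct_def]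
        apply pfunext; intro v
        rw [eval_aeval]
        simp [Fin.sum_univ_two, Matrix.smul_apply]
        linear_combination (2 * (v 0)^2 + 2 * (v 1)^2) * hc2
      · show matAct (↑A) g0 = g0
        rw [hA, hg0, matAct_def]
        apply pfunext; intro v
        rw [eval_aeval]
        simp [Fin.sum_univ_two, Matrix.smul_apply]
        set c := ((Real.sqrt 2)⁻¹ : ℝ)
        linear_combination (16 * (v 0)^2 * (v 1)^2 * ((v 0)^2 - (v 1)^2)^2 *
          (c^6 + c^4 / 2 + c^2 / 4 + 1/8)) * hc2
    have hBS : B ∈ S := by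
      constructor
      · show matAct (↑B) f0 = f0
        rw [hB, hf0, matAct_def]
        apply pfunext; intro v
        rw [eval_aeval]
        simp [Fin.sum_univ_two]
        try ring
      · show matAct (↑B) g0 = g0
        rw [hB, hg0, matAct_def]
        apply pfunext; intro v
        rw [eval_aeval]
        simp [Fin.sum_univ_two]
        try ring
    have hle : Subgroup.closure ({A, B} : Set (Matrix (Fin 2) (Fin 2) ℝ)ˣ) ≤ S := by
      rw [Subgroup.closure_le]
      rintro x (rfl | rfl)
      exacts [hAS, hBS]
    obtain ⟨h1, h2⟩ := hle hg
    -- now induct over the adjoin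
    induction hp using Algebra.adjoin_induction with
    | mem x hx =>
      rcases hx with rfl | hx
      · exact h1
      · rw [Set.mem_singleton_iff] at hx
        rw [hx]
        exact h2
    | algebraMap r => exact matAct_algebraMap _ r
    | add x y hx hy ihx ihy => rw [matAct_add, ihx, ihy]
    | mul x y hx hy ihx ihy => rw [matAct_mulp, ihx, ihy]
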